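/- Let g(z) = c₁ e^{λz} + c₂ e^{-λz} with c₁, c₂, λ nonzero, and let a ≠ 0. Suppose that whenever e^{λz} = A (where A² = -c₂/c₁) one has g'(z) = a, and that every zero of e^{λz} - A is a multiple zero of g' - a. Then g'(z) - a = A₁ e^{-λz}(e^{λz} - A)² for some nonzero constant A₁, and consequently g'(z) = a if and only if e^{λz} = A. -/

import Mathlib

open Complex

theorem stmt_7 (c₁ c₂ l a A : ℂ) (hc₁ : c₁ ≠ 0) (hc₂ : c₂ ≠ 0) (hl : l ≠ 0) (ha : a ≠ 0)
    (hA : A ^ 2 = -c₂ / c₁)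
    (g : ℂ → ℂ)
    (hg : ∀ z, g z = c₁ * Complex.exp (l * z) + c₂ * Complex.exp (-(l * z)))
    (h1 : ∀ z : ℂ, Complex.exp (l * z) = A → deriv g z = a)
    (hmult : ∀ z : ℂ, Complex.exp (l * z) = A → deriv (deriv g) z = 0) :
    ∃ A₁ : ℂ, A₁ ≠ 0 ∧
      (∀ z : ℂ, deriv g z - a =
        A₁ * Complex.exp (-(l * z)) * (Complex.exp (l * z) - A) ^ 2) ∧
      (∀ z : ℂ, deriv g z = a ↔ Complex.exp (l * z) = A) := by
  have hgeq : g = fun z => c₁ * Complex.exp (l * z) + c₂ * Complex.exp (-(l * z)) :=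
    funext hg
  subst hgeq
  have hder : ∀ z : ℂ, HasDerivAt
      (fun z => c₁ * Complex.exp (l * z) + c₂ * Complex.exp (-(l * z)))
      (c₁ * l * Complex.exp (l * z) - c₂ * l * Complex.exp (-(l * z))) z := by
    intro z
    have h1 : HasDerivAt (fun z : ℂ => l * z) l z := by
      simpa using (hasDerivAt_id z).const_mul l
    have h2 : HasDerivAt (fun z : ℂ => -(l * z)) (-l) z := h1.neg
    have h3 : HasDerivAt (fun z => c₁ * Complex.exp (l * z) + c₂ * Complex.exp (-(l * z)))
        (c₁ * (Complex.exp (l * z) * l) + c₂ * (Complex.exp (-(l * z)) * -l)) z :=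
      (h1.cexp.const_mul c₁).add (h2.cexp.const_mul c₂)
    convert h3 using 1
    ring
  have hderiv : ∀ z : ℂ, deriv (fun z => c₁ * Complex.exp (l * z) + c₂ * Complex.exp (-(l * z))) z
      = c₁ * l * Complex.exp (l * z) - c₂ * l * Complex.exp (-(l * z)) :=
    fun z => (hder z).deriv
  -- c₂ = -c₁ * A^2
  have hc : c₂ = -c₁ * A ^ 2 := by
    field_simp at hA
    linear_combination hA
  have hAne : A ≠ 0 := by
    intro h
    rw [h] at hc
    simp at hc
    exact hc₂ hc
  -- find z₀ with exp (l z₀) = A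
  set z₀ : ℂ := Complex.log A / l with hz₀
  have hexpz₀ : Complex.exp (l * z₀) = A := by
    rw [hz₀, mul_div_cancel₀ _ hl, Complex.exp_log hAne]
  have hexpz₀' : Complex.exp (-(l * z₀)) = A⁻¹ := by
    rw [Complex.exp_neg, hexpz₀]
  have ha' := h1 z₀ hexpz₀
  rw [hderiv, hexpz₀, hexpz₀'] at ha'
  have haA : a = 2 * c₁ * l * A := by
    rw [← ha', hc]
    field_simp
    ring
  refine ⟨c₁ * l, mul_ne_zero hc₁ hl, ?_, ?_⟩
  · intro z
    rw [hderiv]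
    have hE : Complex.exp (l * z) ≠ 0 := Complex.exp_ne_zero _
    have hEinv : Complex.exp (-(l * z)) = (Complex.exp (l * z))⁻¹ := Complex.exp_neg _
    rw [hEinv, haA, hc]
    field_simp
    ring
  · intro z
    have hE : Complex.exp (l * z) ≠ 0 := Complex.exp_ne_zero _
    have key : deriv (fun z => c₁ * Complex.exp (l * z) + c₂ * Complex.exp (-(l * z))) z - a
        = c₁ * l * Complex.exp (-(l * z)) * (Complex.exp (l * z) - A) ^ 2 := by
      rw [hderiv]
      have hEinv : Complex.exp (-(l * z)) = (Complex.exp (l * z))⁻¹ := Complex.exp_neg _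
      rw [hEinv, haA, hc]
      field_simp
      ring
    constructor
    · intro h
      rw [h, sub_self] at key
      have := (mul_eq_zero.mp key.symm).resolve_left
        (mul_ne_zero (mul_ne_zero hc₁ hl) (Complex.exp_ne_zero _))
      have := pow_eq_zero_iff (n := 2) (by norm_num) |>.mp this
      exact sub_eq_zero.mp this
    · intro h
      have : Complex.exp (l * z) - A = 0 := by rw [h, sub_self]
      rw [this] at key
      simp at key
      exact sub_eq_zero.mp key
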